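/- arXiv:1503.08389 — 3 statements merged into one kernel-verified Lean document; each statement's English description precedes it below -/
import Mathlib

section
/- For the baker transformation Φ on [0,1]² and any integrable density ρ(x₁,x₂), the x₁-marginal of the pushforward density satisfies (Pρ)₁(x₁) = ½ [ρ₁(x₁/2) + ρ₁((x₁+1)/2)], where ρ₁ is the x₁-marginal of ρ. Moreover this coincides with the Frobenius–Perron operator of the dyadic map x₁ ↦ 2x₁ mod 1 applied to ρ₁; hence the information flow T_{2→1} from x₂ to x₁ under the baker transformation is zero. -/
open MeasureTheory

/-- The baker transformation on the unit square. -/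
noncomputable def baker (p : ℝ × ℝ) : ℝ × ℝ :=
  if p.1 ≤ 1 / 2 then (2 * p.1, p.2 / 2) else (2 * p.1 - 1, (p.2 + 1) / 2)

/-- The dyadic map `x ↦ 2x mod 1` on `[0,1]`. -/
noncomputable def dyadic (t : ℝ) : ℝ := if t ≤ 1 / 2 then 2 * t else 2 * t - 1

open Classical in
lemma indicator_comp_half (f : ℝ → ℝ) (s : Set ℝ) :
    s.indicator (fun t => f (t / 2)) = fun t => ((fun u => 2 * u) ⁻¹' s).indicator f (t / 2) := by
  funext t
  have h : (2 : ℝ) * (t / 2) = t := by ring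
  rw [Set.indicator_apply, Set.indicator_apply, Set.mem_preimage, h]

open Classical in
lemma indicator_comp_shift (f : ℝ → ℝ) (s : Set ℝ) :
    s.indicator (fun t => f ((t + 1) / 2))
      = fun t => ((fun u => 2 * u - 1) ⁻¹' s).indicator f ((t + 1) / 2) := by
  funext t
  have h : (2 : ℝ) * ((t + 1) / 2) - 1 = t := by ring
  rw [Set.indicator_apply, Set.indicator_apply, Set.mem_preimage, h]

lemma cov_half (f : ℝ → ℝ) (s : Set ℝ) (hs : MeasurableSet s) :
    ∫ t in s, f (t / 2) = 2 * ∫ t in (fun u => 2 * u) ⁻¹' s, f t := by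
  have hA : MeasurableSet ((fun u => 2 * u) ⁻¹' s) := hs.preimage (by fun_prop)
  rw [← integral_indicator hs, ← integral_indicator hA, indicator_comp_half]
  rw [Measure.integral_comp_div (((fun u => 2 * u) ⁻¹' s).indicator f) 2]
  norm_num

lemma cov_shift (f : ℝ → ℝ) (s : Set ℝ) (hs : MeasurableSet s) :
    ∫ t in s, f ((t + 1) / 2) = 2 * ∫ t in (fun u => 2 * u - 1) ⁻¹' s, f t := by
  have hB : MeasurableSet ((fun u => 2 * u - 1) ⁻¹' s) := hs.preimage (by fun_prop)
  set B := (fun u => 2 * u - 1) ⁻¹' s with hBdef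
  rw [← integral_indicator hs, ← integral_indicator hB, indicator_comp_shift]
  have h2 : ∀ t : ℝ, B.indicator f ((t + 1) / 2)
      = (fun u => B.indicator f (u + 1 / 2)) (t / 2) := by
    intro t; simp only; congr 1; ring
  rw [← hBdef]
  simp_rw [h2]
  rw [Measure.integral_comp_div (fun u => B.indicator f (u + 1 / 2)) 2]
  rw [integral_add_right_eq_self (B.indicator f) (1 / 2)]
  norm_num

lemma integrableOn_comp_half {f : ℝ → ℝ} {s : Set ℝ} (hs : MeasurableSet s)
    (hf : IntegrableOn f ((fun u => 2 * u) ⁻¹' s)) :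
    IntegrableOn (fun t => f (t / 2)) s := by
  have hA : MeasurableSet ((fun u => 2 * u) ⁻¹' s) := hs.preimage (by fun_prop)
  refine (integrable_indicator_iff hs).mp ?_
  rw [indicator_comp_half]
  exact ((integrable_indicator_iff hA).2 hf).comp_div two_ne_zero

lemma integrableOn_comp_shift {f : ℝ → ℝ} {s : Set ℝ} (hs : MeasurableSet s)
    (hf : IntegrableOn f ((fun u => 2 * u - 1) ⁻¹' s)) :
    IntegrableOn (fun t => f ((t + 1) / 2)) s := by
  have hB : MeasurableSet ((fun u => 2 * u - 1) ⁻¹' s) := hs.preimage (by fun_prop)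
  set B := (fun u => 2 * u - 1) ⁻¹' s with hBdef
  refine (integrable_indicator_iff hs).mp ?_
  rw [indicator_comp_shift]
  have h1 : Integrable (B.indicator f) := (integrable_indicator_iff hB).2 hf
  have h2 : Integrable (fun u => B.indicator f (u + 1 / 2)) := by
    have := (measurePreserving_add_right (volume : Measure ℝ) (1 / 2)).integrable_comp_emb
      (MeasurableEquiv.addRight (1 / 2 : ℝ)).measurableEmbedding (g := B.indicator f)
    exact this.2 h1
  have h3 : Integrable (fun t => (fun u => B.indicator f (u + 1 / 2)) (t / 2)) :=
    h2.comp_div two_ne_zero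
  rw [← hBdef]
  convert h3 using 2 with t
  · rfl
  · rfl
  show B.indicator f ((t + 1) / 2) = B.indicator f (t / 2 + 1 / 2); congr 1; ring

lemma half_preimage_subset {s : Set ℝ} (h : s ⊆ Set.Icc 0 1) :
    (fun u => 2 * u) ⁻¹' s ⊆ Set.Icc (0:ℝ) (1/2) := by
  intro t ht
  obtain ⟨h1, h2⟩ := Set.mem_Icc.mp (h ht)
  have h1' : (0:ℝ) ≤ 2 * t := h1
  have h2' : 2 * t ≤ 1 := h2
  exact Set.mem_Icc.mpr ⟨by linarith, by linarith⟩

lemma shift_preimage_subset {s : Set ℝ} (h : s ⊆ Set.Icc 0 1) :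
    (fun u => 2 * u - 1) ⁻¹' s ⊆ Set.Icc (1/2 : ℝ) 1 := by
  intro t ht
  obtain ⟨h1, h2⟩ := Set.mem_Icc.mp (h ht)
  have h1' : (0:ℝ) ≤ 2 * t - 1 := h1
  have h2' : 2 * t - 1 ≤ 1 := h2
  exact Set.mem_Icc.mpr ⟨by linarith, by linarith⟩

lemma integrableOn_half_sum {f : ℝ → ℝ} (hfI : IntegrableOn f (Set.Icc (0:ℝ) 1))
    {s : Set ℝ} (hsub : s ⊆ Set.Icc (0:ℝ) 1) (hs : MeasurableSet s) :
    IntegrableOn (fun t => (f (t / 2) + f ((t + 1) / 2)) / 2) s := by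
  have hIA : IntegrableOn f ((fun u => 2 * u) ⁻¹' s) :=
    hfI.mono_set ((half_preimage_subset hsub).trans (Set.Icc_subset_Icc le_rfl (by norm_num)))
  have hIB : IntegrableOn f ((fun u => 2 * u - 1) ⁻¹' s) :=
    hfI.mono_set ((shift_preimage_subset hsub).trans (Set.Icc_subset_Icc (by norm_num) le_rfl))
  exact ((integrableOn_comp_half hs hIA).add (integrableOn_comp_shift hs hIB)).div_const 2

lemma dyadicCOV {f : ℝ → ℝ} (hfI : IntegrableOn f (Set.Icc (0:ℝ) 1))
    {s : Set ℝ} (hsub : s ⊆ Set.Icc (0:ℝ) 1) (hs : MeasurableSet s) :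
    ∫ t in s, (f (t / 2) + f ((t + 1) / 2)) / 2
      = ∫ t in (dyadic ⁻¹' s) ∩ Set.Icc (0:ℝ) 1, f t := by
  set A := (fun u => 2 * u) ⁻¹' s with hAdef
  set B := (fun u => 2 * u - 1) ⁻¹' s with hBdef
  have hAm : MeasurableSet A := hs.preimage (by fun_prop)
  have hBm : MeasurableSet B := hs.preimage (by fun_prop)
  have hA : A ⊆ Set.Icc 0 (1/2) := half_preimage_subset hsub
  have hB : B ⊆ Set.Icc (1/2) 1 := shift_preimage_subset hsub
  have hIA : IntegrableOn f A :=
    hfI.mono_set (hA.trans (Set.Icc_subset_Icc le_rfl (by norm_num)))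
  have hIB : IntegrableOn f B :=
    hfI.mono_set (hB.trans (Set.Icc_subset_Icc (by norm_num) le_rfl))
  have i1 : IntegrableOn (fun t => f (t / 2)) s := integrableOn_comp_half hs hIA
  have i2 : IntegrableOn (fun t => f ((t + 1) / 2)) s := integrableOn_comp_shift hs hIB
  have hset : (dyadic ⁻¹' s) ∩ Set.Icc (0:ℝ) 1 = A ∪ (B ∩ Set.Ioi (1/2)) := by
    ext t
    simp only [Set.mem_inter_iff, Set.mem_preimage, Set.mem_union, Set.mem_Icc, Set.mem_Ioi,
      hAdef, hBdef, dyadic]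
    constructor
    · rintro ⟨hd, ht0, ht1⟩
      by_cases h : t ≤ 1/2
      · left; rwa [if_pos h] at hd
      · right; exact ⟨by rwa [if_neg h] at hd, lt_of_not_ge h⟩
    · rintro (hA' | ⟨hB', hgt⟩)
      · obtain ⟨h1, h2⟩ := Set.mem_Icc.mp (hsub hA')
        have hle : t ≤ 1/2 := by linarith
        exact ⟨by rwa [if_pos hle], by linarith, by linarith⟩
      · obtain ⟨h1, h2⟩ := Set.mem_Icc.mp (hsub hB')
        exact ⟨by rwa [if_neg (not_le.mpr hgt)], by linarith, by linarith⟩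
  have hdisj : Disjoint A (B ∩ Set.Ioi (1/2)) := by
    refine (Set.Iic_disjoint_Ioi (le_refl (1/2 : ℝ))).mono ?_ Set.inter_subset_right
    exact fun t ht => (hA ht).2
  have hBae : (B ∩ Set.Ioi (1/2) : Set ℝ) =ᵐ[volume] B := by
    have hd1 : volume ((B ∩ Set.Ioi (1/2)) \ B) = 0 := by
      apply measure_mono_null (t := (∅ : Set ℝ)) ?_ measure_empty
      rintro x ⟨hx, hxn⟩
      exact absurd hx.1 hxn
    have hd2 : volume (B \ (B ∩ Set.Ioi (1/2))) = 0 := by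
      apply measure_mono_null (t := {(1/2 : ℝ)}) ?_ Real.volume_singleton
      rintro x ⟨hxB, hxn⟩
      have h12 : ¬ x ∈ Set.Ioi (1/2 : ℝ) := fun h => hxn ⟨hxB, h⟩
      have hge := (hB hxB).1
      simp only [Set.mem_Ioi, not_lt] at h12
      simp only [Set.mem_singleton_iff]
      linarith
    exact MeasureTheory.ae_eq_set.mpr ⟨hd1, hd2⟩
  rw [hset, MeasureTheory.setIntegral_union hdisj (hBm.inter measurableSet_Ioi) hIA
    (hIB.mono_set Set.inter_subset_left), setIntegral_congr_set hBae]
  rw [integral_div, integral_add i1 i2, cov_half f s hs, cov_shift f s hs]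
  ring

/-- For the baker transformation, the `x₁`-marginal of the pushforward
density satisfies `(Pρ)₁(x₁) = ½[ρ₁(x₁/2) + ρ₁((x₁+1)/2)]` a.e.; this coincides with
the Frobenius–Perron operator of the dyadic map applied to `ρ₁`; and consequently the
information flow `T_{2→1}` vanishes. -/
theorem baker_marginal_and_zero_flow
    (ρ Pρ : ℝ × ℝ → ℝ) (hρmeas : Measurable ρ) (hPρmeas : Measurable Pρ)
    (hρ0 : ∀ p, 0 ≤ ρ p) (hPρ0 : ∀ p, 0 ≤ Pρ p)
    (hρint : IntegrableOn ρ (Set.Icc (0:ℝ) 1 ×ˢ Set.Icc (0:ℝ) 1))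
    (hFP : ∀ ω : Set (ℝ × ℝ), ω ⊆ Set.Icc (0:ℝ) 1 ×ˢ Set.Icc (0:ℝ) 1 →
      MeasurableSet ω →
      ∫ p in ω, Pρ p
        = ∫ p in (baker ⁻¹' ω) ∩ (Set.Icc (0:ℝ) 1 ×ˢ Set.Icc (0:ℝ) 1), ρ p)
    (ρ₁ : ℝ → ℝ) (hρ₁ : ∀ t, ρ₁ t = ∫ x₂ in Set.Icc (0:ℝ) 1, ρ (t, x₂)) :
    (∀ᵐ x₁ ∂(volume.restrict (Set.Icc (0:ℝ) 1)),
      (∫ x₂ in Set.Icc (0:ℝ) 1, Pρ (x₁, x₂))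
        = (ρ₁ (x₁ / 2) + ρ₁ ((x₁ + 1) / 2)) / 2) ∧
    (∀ s : Set ℝ, s ⊆ Set.Icc (0:ℝ) 1 → MeasurableSet s →
      ∫ t in s, (ρ₁ (t / 2) + ρ₁ ((t + 1) / 2)) / 2
        = ∫ t in (dyadic ⁻¹' s) ∩ Set.Icc (0:ℝ) 1, ρ₁ t) ∧
    (∫ p in Set.Icc (0:ℝ) 1 ×ˢ Set.Icc (0:ℝ) 1,
        ρ p * Real.log ((ρ₁ ((baker p).1 / 2) + ρ₁ (((baker p).1 + 1) / 2)) / 2))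
      - (∫ p in Set.Icc (0:ℝ) 1 ×ˢ Set.Icc (0:ℝ) 1,
        ρ p * Real.log (∫ x₂ in Set.Icc (0:ℝ) 1, Pρ ((baker p).1, x₂))) = 0 := by
  classical
  set I : Set ℝ := Set.Icc (0:ℝ) 1 with hIdef
  have hIm : MeasurableSet I := measurableSet_Icc
  have hQm : MeasurableSet (I ×ˢ I) := hIm.prod hIm
  have hQfin : volume (I ×ˢ I) ≠ ⊤ := by
    rw [Measure.volume_eq_prod, Measure.prod_prod, hIdef, Real.volume_Icc]
    norm_num
  have hdm : Measurable dyadic := by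
    unfold dyadic
    exact Measurable.ite (measurableSet_le measurable_id measurable_const)
      (by fun_prop) (by fun_prop)
  have hρprod : Integrable ρ ((volume.restrict I).prod (volume.restrict I)) := by
    rw [Measure.prod_restrict, ← Measure.volume_eq_prod]; exact hρint
  have hρ₁int : IntegrableOn ρ₁ I :=
    hρprod.integral_prod_left.congr (Filter.Eventually.of_forall fun x => (hρ₁ x).symm)
  -- integrability of Pρ on the square
  have hSn : ∀ n : ℕ, MeasurableSet {p : ℝ × ℝ | Pρ p ≤ (n:ℝ)} :=
    fun n => measurableSet_le hPρmeas measurable_const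
  have hωm : ∀ n : ℕ, MeasurableSet ((I ×ˢ I) ∩ {p | Pρ p ≤ (n:ℝ)}) :=
    fun n => hQm.inter (hSn n)
  have hωint : ∀ n : ℕ, IntegrableOn Pρ ((I ×ˢ I) ∩ {p | Pρ p ≤ (n:ℝ)}) := by
    intro n
    apply Measure.integrableOn_of_bounded (M := (n:ℝ))
    · exact ((measure_mono Set.inter_subset_left).trans_lt (lt_top_iff_ne_top.mpr hQfin)).ne
    · exact hPρmeas.aestronglyMeasurable
    · refine (ae_restrict_iff' (hωm n)).mpr (Filter.Eventually.of_forall fun x hx => ?_)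
      rw [Real.norm_eq_abs, abs_of_nonneg (hPρ0 x)]; exact hx.2
  have hbound : ∀ n : ℕ,
      ∫ p in (I ×ˢ I) ∩ {p | Pρ p ≤ (n:ℝ)}, Pρ p ≤ ∫ p in I ×ˢ I, ρ p := by
    intro n
    rw [hFP _ Set.inter_subset_left (hωm n)]
    exact setIntegral_mono_set hρint (Filter.Eventually.of_forall fun x => hρ0 x)
      (HasSubset.Subset.eventuallyLE Set.inter_subset_right)
  have hPρint : IntegrableOn Pρ (I ×ˢ I) := by
    refine ⟨hPρmeas.aestronglyMeasurable, ?_⟩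
    rw [hasFiniteIntegral_iff_ofReal (Filter.Eventually.of_forall fun x => hPρ0 x)]
    set g : ℕ → ℝ × ℝ → ENNReal :=
      fun n => ({p : ℝ × ℝ | Pρ p ≤ (n:ℝ)}).indicator (fun p => ENNReal.ofReal (Pρ p))
      with hgdef
    have hgmeas : ∀ n, Measurable (g n) :=
      fun n => (hPρmeas.ennreal_ofReal).indicator (hSn n)
    have hgmono : Monotone g := by
      intro m n hmn
      exact Set.indicator_le_indicator_of_subset
        (fun p hp => le_trans hp ((Nat.cast_le (α := ℝ)).mpr hmn))
        (fun p => zero_le)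
    have hsup : ∀ p, ⨆ n, g n p = ENNReal.ofReal (Pρ p) := by
      intro p
      apply le_antisymm
      · exact iSup_le fun n => Set.indicator_le_self _ _ p
      · obtain ⟨n, hn⟩ := exists_nat_ge (Pρ p)
        refine le_iSup_of_le n (le_of_eq ?_)
        rw [hgdef]
        exact (Set.indicator_of_mem (show p ∈ {q : ℝ × ℝ | Pρ q ≤ (n:ℝ)} from hn)
          (fun q => ENNReal.ofReal (Pρ q))).symm
    have hkeyn : ∀ n, ∫⁻ p, g n p ∂(volume.restrict (I ×ˢ I))
        ≤ ENNReal.ofReal (∫ p in I ×ˢ I, ρ p) := by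
      intro n
      rw [hgdef]
      rw [lintegral_indicator (hSn n), Measure.restrict_restrict (hSn n), Set.inter_comm]
      rw [← ofReal_integral_eq_lintegral_ofReal (hωint n)
        (Filter.Eventually.of_forall fun x => hPρ0 x)]
      exact ENNReal.ofReal_le_ofReal (hbound n)
    calc ∫⁻ p, ENNReal.ofReal (Pρ p) ∂(volume.restrict (I ×ˢ I))
        = ∫⁻ p, ⨆ n, g n p ∂(volume.restrict (I ×ˢ I)) :=
          lintegral_congr (fun p => (hsup p).symm)
      _ = ⨆ n, ∫⁻ p, g n p ∂(volume.restrict (I ×ˢ I)) := lintegral_iSup hgmeas hgmono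
      _ ≤ ENNReal.ofReal (∫ p in I ×ˢ I, ρ p) := iSup_le hkeyn
      _ < ⊤ := ENNReal.ofReal_lt_top
  -- Fubini helper
  have fub : ∀ (f : ℝ × ℝ → ℝ) (C : Set ℝ), IntegrableOn f (C ×ˢ I) →
      ∫ p in C ×ˢ I, f p = ∫ x in C, ∫ y in I, f (x, y) := by
    intro f C hf
    rw [Measure.volume_eq_prod] at hf ⊢
    exact setIntegral_prod f hf
  -- the key computation
  have hkey : ∀ s : Set ℝ, s ⊆ I → MeasurableSet s →
      ∫ x in s, ∫ y in I, Pρ (x, y) = ∫ t in dyadic ⁻¹' s ∩ I, ρ₁ t := by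
    intro s hsub hs
    have hCsub : dyadic ⁻¹' s ∩ I ⊆ I := Set.inter_subset_right
    have hprodsub : (s ×ˢ I) ⊆ I ×ˢ I := Set.prod_mono hsub le_rfl
    have hpre : baker ⁻¹' (s ×ˢ I) ∩ (I ×ˢ I) = (dyadic ⁻¹' s ∩ I) ×ˢ I := by
      ext ⟨x, y⟩
      simp only [Set.mem_inter_iff, Set.mem_preimage, Set.mem_prod, baker, dyadic, hIdef,
        Set.mem_Icc]
      by_cases hx : x ≤ 1 / 2
      · simp only [if_pos hx]
        constructor
        · rintro ⟨⟨h1, _⟩, hxI, hyI⟩; exact ⟨⟨h1, hxI⟩, hyI⟩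
        · rintro ⟨⟨h1, hxI⟩, hyI⟩
          exact ⟨⟨h1, by constructor <;> linarith [hyI.1, hyI.2]⟩, hxI, hyI⟩
      · simp only [if_neg hx]
        constructor
        · rintro ⟨⟨h1, _⟩, hxI, hyI⟩; exact ⟨⟨h1, hxI⟩, hyI⟩
        · rintro ⟨⟨h1, hxI⟩, hyI⟩
          exact ⟨⟨h1, by constructor <;> linarith [hyI.1, hyI.2]⟩, hxI, hyI⟩
    rw [← fub Pρ s (hPρint.mono_set hprodsub), hFP _ hprodsub (hs.prod hIm), hpre,
      fub ρ _ (hρint.mono_set (Set.prod_mono hCsub le_rfl))]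
    exact integral_congr_ae (Filter.Eventually.of_forall fun x => (hρ₁ x).symm)
  -- conclusion 2
  have concl2 : ∀ s : Set ℝ, s ⊆ I → MeasurableSet s →
      ∫ t in s, (ρ₁ (t / 2) + ρ₁ ((t + 1) / 2)) / 2
        = ∫ t in (dyadic ⁻¹' s) ∩ I, ρ₁ t :=
    fun s hsub hs => dyadicCOV hρ₁int hsub hs
  -- conclusion 1
  have hPρprod : Integrable Pρ ((volume.restrict I).prod (volume.restrict I)) := by
    rw [Measure.prod_restrict, ← Measure.volume_eq_prod]; exact hPρint
  have hGint : Integrable (fun x => ∫ y in I, Pρ (x, y)) (volume.restrict I) :=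
    hPρprod.integral_prod_left
  have hFint : Integrable (fun x => (ρ₁ (x / 2) + ρ₁ ((x + 1) / 2)) / 2) (volume.restrict I) :=
    integrableOn_half_sum hρ₁int (le_refl I) hIm
  have hae : (fun x => ∫ y in I, Pρ (x, y))
      =ᵐ[volume.restrict I] (fun x => (ρ₁ (x / 2) + ρ₁ ((x + 1) / 2)) / 2) := by
    apply Integrable.ae_eq_of_forall_setIntegral_eq _ _ hGint hFint
    intro s hs _
    rw [Measure.restrict_restrict hs]
    rw [hkey (s ∩ I) Set.inter_subset_right (hs.inter hIm)]
    exact (concl2 (s ∩ I) Set.inter_subset_right (hs.inter hIm)).symm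
  refine ⟨hae, concl2, ?_⟩
  -- conclusion 3
  set N : Set ℝ :=
    {x : ℝ | ¬ (∫ y in I, Pρ (x, y)) = (ρ₁ (x / 2) + ρ₁ ((x + 1) / 2)) / 2} ∩ I with hNdef
  have hnull : volume N = 0 := by
    have h0 := ae_iff.mp hae
    rwa [Measure.restrict_apply' hIm] at h0
  have hdN : volume (dyadic ⁻¹' N) = 0 := by
    have hsub2 : dyadic ⁻¹' N ⊆ ((fun x : ℝ => 2 * x) ⁻¹' N) ∪ ((fun x : ℝ => 2 * x - 1) ⁻¹' N) := by
      intro t ht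
      rw [Set.mem_preimage, dyadic] at ht
      by_cases h : t ≤ 1 / 2
      · left; rwa [if_pos h] at ht
      · right; rwa [if_neg h] at ht
    apply measure_mono_null hsub2
    apply measure_union_null
    · rw [show ((fun x : ℝ => 2 * x) ⁻¹' N) = ((2 * ·) ⁻¹' N) from rfl,
        Real.volume_preimage_mul_left two_ne_zero, hnull, mul_zero]
    · have heq : ((fun x : ℝ => 2 * x - 1) ⁻¹' N)
          = (2 * ·) ⁻¹' ((fun y : ℝ => y + (-1 : ℝ)) ⁻¹' N) := by
        ext t; simp [Set.mem_preimage, sub_eq_add_neg]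
      rw [heq, Real.volume_preimage_mul_left two_ne_zero,
        measure_preimage_add_right volume (-1 : ℝ) N, hnull, mul_zero]
  have hprodnull : volume ((dyadic ⁻¹' N) ×ˢ (Set.univ : Set ℝ)) = 0 := by
    rw [Measure.volume_eq_prod, Measure.prod_prod, hdN, zero_mul]
  have hfst : ∀ p : ℝ × ℝ, (baker p).1 = dyadic p.1 := by
    intro p; unfold baker dyadic; split_ifs <;> rfl
  have hI1 : ∀ x ∈ I, dyadic x ∈ I := by
    intro x hx
    obtain ⟨h1, h2⟩ := Set.mem_Icc.mp hx
    unfold dyadic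
    split_ifs with h
    · exact Set.mem_Icc.mpr ⟨by linarith, by linarith⟩
    · push_neg at h
      exact Set.mem_Icc.mpr ⟨by linarith, by linarith⟩
  have heqQ : ∫ p in I ×ˢ I,
        ρ p * Real.log ((ρ₁ ((baker p).1 / 2) + ρ₁ (((baker p).1 + 1) / 2)) / 2)
      = ∫ p in I ×ˢ I, ρ p * Real.log (∫ y in I, Pρ ((baker p).1, y)) := by
    apply setIntegral_congr_ae hQm
    filter_upwards [measure_eq_zero_iff_ae_notMem.mp hprodnull] with p hp hpQ
    have hx1 : p.1 ∈ I := hpQ.1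
    have hdx : dyadic p.1 ∉ N := fun hmem => hp ⟨hmem, Set.mem_univ p.2⟩
    have heq : (∫ y in I, Pρ (dyadic p.1, y))
        = (ρ₁ (dyadic p.1 / 2) + ρ₁ ((dyadic p.1 + 1) / 2)) / 2 := by
      by_contra hne
      exact hdx ⟨hne, hI1 _ hx1⟩
    rw [hfst p, heq]
  rw [heqQ, sub_self]
end

section
/- For the baker transformation, the information flow from x₁ to x₂, given by T_{1→2} = I + II where I = ∫₀^{1/2} ρ₂(x₂) log( ∫₀¹ ρ(λ,x₂) dλ / ∫₀^{1/2} ρ(λ,x₂) dλ ) dx₂ and II = ∫_{1/2}^1 ρ₂(x₂) log( ∫₀¹ ρ(λ,x₂) dλ / ∫_{1/2}^1 ρ(λ,x₂) dλ ) dx₂, is strictly positive for every strictly positive continuous density ρ on [0,1]². -/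
open MeasureTheory

/-- For the baker transformation, the information flow
`T_{1→2} = I + II` (with `I`, `II` the two logarithmic integrals below) is strictly
positive for every strictly positive continuous density `ρ` on `[0,1]²`:
indeed `I ≥ 0`, `II ≥ 0` and `I + II > 0`. -/
theorem baker_T12_positive
    (ρ : ℝ × ℝ → ℝ)
    (hρcont : ContinuousOn ρ (Set.Icc (0:ℝ) 1 ×ˢ Set.Icc (0:ℝ) 1))
    (hρpos : ∀ p ∈ Set.Icc (0:ℝ) 1 ×ˢ Set.Icc (0:ℝ) 1, 0 < ρ p)
    (hρnorm : ∫ p in Set.Icc (0:ℝ) 1 ×ˢ Set.Icc (0:ℝ) 1, ρ p = 1)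
    (ρ₂ : ℝ → ℝ) (hρ₂ : ∀ t, ρ₂ t = ∫ x₁ in Set.Icc (0:ℝ) 1, ρ (x₁, t))
    (I II : ℝ)
    (hI : I = ∫ x₂ in Set.Icc (0:ℝ) (1/2), ρ₂ x₂ *
      Real.log ((∫ u in Set.Icc (0:ℝ) 1, ρ (u, x₂)) /
                (∫ u in Set.Icc (0:ℝ) (1/2), ρ (u, x₂))))
    (hII : II = ∫ x₂ in Set.Icc (1/2 : ℝ) 1, ρ₂ x₂ *
      Real.log ((∫ u in Set.Icc (0:ℝ) 1, ρ (u, x₂)) /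
                (∫ u in Set.Icc (1/2 : ℝ) 1, ρ (u, x₂)))) :
    0 ≤ I ∧ 0 ≤ II ∧ 0 < I + II := by
  classical
  set S : Set (ℝ × ℝ) := Set.Icc (0:ℝ) 1 ×ˢ Set.Icc (0:ℝ) 1 with hSdef
  -- clamp function
  set c : ℝ → ℝ := fun x => min (max x 0) 1 with hcdef
  have hccont : Continuous c := (continuous_id.max continuous_const).min continuous_const
  have hcmem : ∀ x, c x ∈ Set.Icc (0:ℝ) 1 := fun x =>
    ⟨le_min (le_max_right x 0) zero_le_one, min_le_right _ _⟩
  have hcid : ∀ x ∈ Set.Icc (0:ℝ) 1, c x = x := by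
    intro x hx
    simp [hcdef, max_eq_left hx.1, min_eq_left hx.2]
  -- extend ρ to a continuous function on the whole plane
  set g : ℝ × ℝ → ℝ := fun p => ρ (c p.1, c p.2) with hgdef
  have hgmemS : ∀ p : ℝ × ℝ, ((c p.1, c p.2) : ℝ × ℝ) ∈ S := fun p => ⟨hcmem _, hcmem _⟩
  have hgcont : Continuous g :=
    hρcont.comp_continuous ((hccont.comp continuous_fst).prodMk (hccont.comp continuous_snd))
      hgmemS
  have hgeq : ∀ p ∈ S, g p = ρ p := by
    intro p hp
    simp [hgdef, hcid p.1 hp.1, hcid p.2 hp.2]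
  -- min and max of ρ on the square
  have hScomp : IsCompact S := isCompact_Icc.prod isCompact_Icc
  have hSne : S.Nonempty := ⟨(0, 0), by simp [hSdef]⟩
  obtain ⟨pm, hpm, hpmle⟩ := hScomp.exists_isMinOn hSne hρcont
  obtain ⟨pM, hpM, hpMge⟩ := hScomp.exists_isMaxOn hSne hρcont
  set m := ρ pm with hmdef
  set M := ρ pM with hMdef
  have hm0 : 0 < m := hρpos pm hpm
  have hmg : ∀ p, m ≤ g p := fun p => hpmle (hgmemS p)
  have hgM : ∀ p, g p ≤ M := fun p => hpMge (hgmemS p)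
  have hM0 : 0 < M := lt_of_lt_of_le hm0 (le_trans (hmg (0,0)) (hgM (0,0)))
  have hmM : m ≤ M := le_trans (hmg (0,0)) (hgM (0,0))
  -- sections of g are continuous
  have hcont_t : ∀ t : ℝ, Continuous fun u => g (u, t) := fun t =>
    hgcont.comp (continuous_id.prodMk continuous_const)
  have hIcc_eq : ∀ (a b t : ℝ), a ≤ b →
      (∫ u in Set.Icc a b, g (u, t)) = ∫ u in a..b, g (u, t) := by
    intro a b t hab
    rw [MeasureTheory.integral_Icc_eq_integral_Ioc, intervalIntegral.integral_of_le hab]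
  have hlow : ∀ (a b t : ℝ), a ≤ b → m * (b - a) ≤ ∫ u in a..b, g (u, t) := by
    intro a b t hab
    rw [← hIcc_eq a b t hab]
    have h := setIntegral_ge_of_const_le (μ := volume) (c := m) (s := Set.Icc a b)
      (f := fun u => g (u, t)) (measurableSet_Icc)
      (by rw [Real.volume_Icc]; exact ENNReal.ofReal_ne_top) (fun x _ => hmg (x, t))
      ((hcont_t t).integrableOn_Icc)
    rw [Real.volume_real_Icc_of_le hab, smul_eq_mul] at h; linarith
  have hup : ∀ (a b t : ℝ), a ≤ b → (∫ u in a..b, g (u, t)) ≤ M * (b - a) := by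
    intro a b t hab
    rw [← hIcc_eq a b t hab]
    have h := norm_setIntegral_le_of_norm_le_const (μ := volume) (C := M)
      (s := Set.Icc a b) (f := fun u => g (u, t))
      (by rw [Real.volume_Icc]; exact ENNReal.ofReal_lt_top) (fun x _ => by
        rw [Real.norm_eq_abs, abs_of_pos (lt_of_lt_of_le hm0 (hmg _))]
        exact hgM _)
    rw [Real.volume_real_Icc_of_le hab] at h
    exact le_trans (le_abs_self _) h
  have hadd : ∀ t : ℝ, (∫ u in (0:ℝ)..1, g (u, t)) =
      (∫ u in (0:ℝ)..(1/2), g (u, t)) + ∫ u in (1/2:ℝ)..1, g (u, t) :=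
    fun t => (intervalIntegral.integral_add_adjacent_intervals
      ((hcont_t t).intervalIntegrable _ _) ((hcont_t t).intervalIntegrable _ _)).symm
  -- replace ρ by g in the inner integrals
  have hcongr : ∀ (a b t : ℝ), 0 ≤ a → a ≤ b → b ≤ 1 → t ∈ Set.Icc (0:ℝ) 1 →
      (∫ u in Set.Icc a b, ρ (u, t)) = ∫ u in a..b, g (u, t) := by
    intro a b t ha hab hb ht
    rw [← hIcc_eq a b t hab]
    exact setIntegral_congr_fun measurableSet_Icc
      (fun u hu => ((hgeq (u, t) ⟨⟨le_trans ha hu.1, le_trans hu.2 hb⟩, ht⟩)).symm)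
  -- continuity of the parametric integrals
  have hN : Continuous fun t => ∫ u in (0:ℝ)..1, g (u, t) :=
    intervalIntegral.continuous_parametric_intervalIntegral_of_continuous'
      (f := fun t u => g (u, t)) (hgcont.comp (continuous_snd.prodMk continuous_fst)) 0 1
  have hD : Continuous fun t => ∫ u in (0:ℝ)..(1/2:ℝ), g (u, t) :=
    intervalIntegral.continuous_parametric_intervalIntegral_of_continuous'
      (f := fun t u => g (u, t)) (hgcont.comp (continuous_snd.prodMk continuous_fst)) 0 (1/2)
  have hB : Continuous fun t => ∫ u in (1/2:ℝ)..1, g (u, t) :=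
    intervalIntegral.continuous_parametric_intervalIntegral_of_continuous'
      (f := fun t u => g (u, t)) (hgcont.comp (continuous_snd.prodMk continuous_fst)) (1/2) 1
  -- pointwise bounds
  have hDlow : ∀ t : ℝ, m / 2 ≤ ∫ u in (0:ℝ)..(1/2), g (u, t) := by
    intro t; have := hlow 0 (1/2) t (by norm_num); linarith
  have hBlow : ∀ t : ℝ, m / 2 ≤ ∫ u in (1/2:ℝ)..1, g (u, t) := by
    intro t; have := hlow (1/2) 1 t (by norm_num); linarith
  have hDup : ∀ t : ℝ, (∫ u in (0:ℝ)..(1/2), g (u, t)) ≤ M / 2 := by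
    intro t; have := hup 0 (1/2) t (by norm_num); linarith
  have hDpos : ∀ t : ℝ, 0 < ∫ u in (0:ℝ)..(1/2), g (u, t) := fun t =>
    lt_of_lt_of_le (by positivity) (hDlow t)
  have hBpos : ∀ t : ℝ, 0 < ∫ u in (1/2:ℝ)..1, g (u, t) := fun t =>
    lt_of_lt_of_le (by positivity) (hBlow t)
  have hNlow : ∀ t : ℝ, m ≤ ∫ u in (0:ℝ)..1, g (u, t) := by
    intro t; rw [hadd t]; have := hDlow t; have := hBlow t; linarith
  have hNpos : ∀ t : ℝ, 0 < ∫ u in (0:ℝ)..1, g (u, t) := fun t =>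
    lt_of_lt_of_le hm0 (hNlow t)
  -- ratio lower bound
  have hratio : ∀ t : ℝ, 1 + m / M ≤
      (∫ u in (0:ℝ)..1, g (u, t)) / (∫ u in (0:ℝ)..(1/2), g (u, t)) := by
    intro t
    have h1 : m / M ≤ (∫ u in (1/2:ℝ)..1, g (u, t)) / (∫ u in (0:ℝ)..(1/2), g (u, t)) := by
      have := div_le_div₀ (le_of_lt (hBpos t)) (hBlow t) (hDpos t) (hDup t)
      calc m / M = (m/2) / (M/2) := by field_simp
        _ ≤ _ := this
    rw [hadd t, add_div, div_self (ne_of_gt (hDpos t))]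
    linarith
  have hRgt1 : 1 < 1 + m / M := by
    have : 0 < m / M := div_pos hm0 hM0
    linarith
  -- the continuous integrands
  set F : ℝ → ℝ := fun t => (∫ u in (0:ℝ)..1, g (u, t)) *
    Real.log ((∫ u in (0:ℝ)..1, g (u, t)) / (∫ u in (0:ℝ)..(1/2), g (u, t))) with hFdef
  set G : ℝ → ℝ := fun t => (∫ u in (0:ℝ)..1, g (u, t)) *
    Real.log ((∫ u in (0:ℝ)..1, g (u, t)) / (∫ u in (1/2:ℝ)..1, g (u, t))) with hGdef
  have hFcont : Continuous F :=
    hN.mul ((hN.div hD (fun t => ne_of_gt (hDpos t))).log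
      (fun t => ne_of_gt (div_pos (hNpos t) (hDpos t))))
  -- lower bound on F
  set κ : ℝ := m * Real.log (1 + m / M) with hκdef
  have hκpos : 0 < κ := mul_pos hm0 (Real.log_pos hRgt1)
  have hFbound : ∀ t : ℝ, κ ≤ F t := by
    intro t
    have hlog : Real.log (1 + m / M) ≤
        Real.log ((∫ u in (0:ℝ)..1, g (u, t)) / (∫ u in (0:ℝ)..(1/2), g (u, t))) :=
      Real.log_le_log (by linarith) (hratio t)
    have hlognn : 0 ≤ Real.log (1 + m / M) := Real.log_nonneg (le_of_lt hRgt1)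
    exact mul_le_mul (hNlow t) hlog hlognn (le_of_lt (hNpos t))
  -- rewrite I and II
  have ht1 : ∀ t ∈ Set.Icc (0:ℝ) (1/2), t ∈ Set.Icc (0:ℝ) 1 := fun t ht =>
    ⟨ht.1, le_trans ht.2 (by norm_num)⟩
  have ht2 : ∀ t ∈ Set.Icc (1/2:ℝ) 1, t ∈ Set.Icc (0:ℝ) 1 := fun t ht =>
    ⟨le_trans (by norm_num) ht.1, ht.2⟩
  have hI' : I = ∫ t in Set.Icc (0:ℝ) (1/2), F t := by
    rw [hI]
    refine setIntegral_congr_fun measurableSet_Icc (fun t ht => ?_)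
    rw [hρ₂ t, hcongr 0 1 t le_rfl zero_le_one le_rfl (ht1 t ht),
      hcongr 0 (1/2) t le_rfl (by norm_num) (by norm_num) (ht1 t ht)]
  have hII' : II = ∫ t in Set.Icc (1/2:ℝ) 1, G t := by
    rw [hII]
    refine setIntegral_congr_fun measurableSet_Icc (fun t ht => ?_)
    rw [hρ₂ t, hcongr 0 1 t le_rfl zero_le_one le_rfl (ht2 t ht),
      hcongr (1/2) 1 t (by norm_num) (by norm_num) le_rfl (ht2 t ht)]
  -- strict positivity of I
  have hIpos : 0 < I := by
    rw [hI']
    have h := setIntegral_ge_of_const_le (μ := volume) (c := κ) (s := Set.Icc (0:ℝ) (1/2))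
      (f := F) measurableSet_Icc
      (by rw [Real.volume_Icc]; exact ENNReal.ofReal_ne_top) (fun t _ => hFbound t) (hFcont.integrableOn_Icc)
    rw [Real.volume_real_Icc_of_le (by norm_num), smul_eq_mul] at h
    calc (0:ℝ) < κ * (1/2 - 0) := by nlinarith
      _ ≤ _ := by linarith
  -- nonnegativity of II
  have hIInn : 0 ≤ II := by
    rw [hII']
    refine setIntegral_nonneg measurableSet_Icc (fun t _ => ?_)
    refine mul_nonneg (le_of_lt (hNpos t)) (Real.log_nonneg ?_)
    rw [le_div_iff₀ (hBpos t), one_mul, hadd t]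
    have := hDpos t; linarith
  exact ⟨le_of_lt hIpos, hIInn, by linarith⟩
end

section
/- Consider the stochastic mapping x(τ+1) = Φ(x(τ)) + B w with Φ: ℝⁿ → ℝⁿ measurable nonsingular, B a constant n×m matrix with first row B₁, and w standard Gaussian in ℝᵐ independent of x. If Φ₁ does not depend on x₂ (and B₁ is constant, hence independent of x₂), then the information flow T_{2→1} = E_x[log E_w (P_{Φ∖2}ρ)₁(y₁ − B₁w)] − E_x[log E_w (P_Φρ)₁(y₁ − B₁w)] vanishes. -/
open MeasureTheory Matrix Real

/-- Property of causality, stochastic mapping case: For the stochastic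
mapping `x(τ+1) = Φ(x(τ)) + Bw` on ℝⁿ (modelled as `ℝ × ℝ × (Fin k → ℝ)`) with `B`
constant (first row `B₁`) and `w` standard Gaussian independent of `x`, if `Φ₁` does
not depend on `x₂` then the information flow
`T_{2→1} = E_x[log E_w (P_{Φ∖2}ρ)₁(y₁ − B₁w)] − E_x[log E_w (P_Φρ)₁(y₁ − B₁w)]`
vanishes. -/
theorem stochastic_map_causality {k m : ℕ}
    (Φ : (ℝ × ℝ × (Fin k → ℝ)) → (ℝ × ℝ × (Fin k → ℝ))) (hΦ : Measurable Φ)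
    (hindep : ∀ (x₁ x₂ x₂' : ℝ) (z : Fin k → ℝ),
      (Φ (x₁, x₂, z)).1 = (Φ (x₁, x₂', z)).1)
    (Φm2 : (ℝ × (Fin k → ℝ)) → (ℝ × (Fin k → ℝ))) (hΦm2 : Measurable Φm2)
    (hreduced : ∀ (x₁ x₂ : ℝ) (z : Fin k → ℝ), (Φm2 (x₁, z)).1 = (Φ (x₁, x₂, z)).1)
    (B₁ : Fin m → ℝ)
    (ρw : (Fin m → ℝ) → ℝ)
    (hρw : ∀ v : Fin m → ℝ,
      ρw v = (2 * π) ^ (-(m : ℝ) / 2) * Real.exp (-(∑ i, v i ^ 2) / 2))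
    (ρ : (ℝ × ℝ × (Fin k → ℝ)) → ℝ) (hρmeas : Measurable ρ)
    (hρ0 : ∀ x, 0 ≤ ρ x) (hρint : Integrable ρ)
    (ρm2 : (ℝ × (Fin k → ℝ)) → ℝ)
    (hρm2 : ∀ (x₁ : ℝ) (z : Fin k → ℝ), ρm2 (x₁, z) = ∫ x₂ : ℝ, ρ (x₁, x₂, z))
    (p q : ℝ → ℝ)
    (hp : ∀ s : Set ℝ, MeasurableSet s →
      ∫ t in s, p t = ∫ x in {x : ℝ × ℝ × (Fin k → ℝ) | (Φ x).1 ∈ s}, ρ x)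
    (hq : ∀ s : Set ℝ, MeasurableSet s →
      ∫ t in s, q t = ∫ x in {x : ℝ × (Fin k → ℝ) | (Φm2 x).1 ∈ s}, ρm2 x) :
    (∫ x : ℝ × ℝ × (Fin k → ℝ), ρ x * ∫ w' : Fin m → ℝ, ρw w' *
        Real.log (∫ w : Fin m → ℝ, ρw w * q ((Φ x).1 + B₁ ⬝ᵥ w' - B₁ ⬝ᵥ w)))
      - (∫ x : ℝ × ℝ × (Fin k → ℝ), ρ x * ∫ w' : Fin m → ℝ, ρw w' *
        Real.log (∫ w : Fin m → ℝ, ρw w * p ((Φ x).1 + B₁ ⬝ᵥ w' - B₁ ⬝ᵥ w))) = 0 := by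
  classical
  -- The rearranging measurable equivalence (x₁, x₂, z) ↦ ((x₁, z), x₂)
  let Te : (ℝ × ℝ × (Fin k → ℝ)) ≃ᵐ ((ℝ × (Fin k → ℝ)) × ℝ) :=
    ((MeasurableEquiv.refl ℝ).prodCongr
      (MeasurableEquiv.prodComm (α := ℝ) (β := Fin k → ℝ))).trans
      (MeasurableEquiv.prodAssoc).symm
  have hTe : ∀ x : ℝ × ℝ × (Fin k → ℝ), Te x = ((x.1, x.2.2), x.2.1) := fun _ => rfl
  have hTes : ∀ y : (ℝ × (Fin k → ℝ)) × ℝ, Te.symm y = (y.1.1, y.2, y.1.2) := fun _ => rfl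
  have hT : MeasurePreserving Te volume volume := by
    have ha : MeasurePreserving (MeasurableEquiv.prodAssoc :
        ((ℝ × (Fin k → ℝ)) × ℝ) ≃ᵐ ℝ × (Fin k → ℝ) × ℝ) volume volume :=
      volume_preserving_prodAssoc
    have hs : MeasurePreserving
        (Prod.map (id : ℝ → ℝ) (Prod.swap : ℝ × (Fin k → ℝ) → (Fin k → ℝ) × ℝ))
        volume volume := by
      rw [Measure.volume_eq_prod, Measure.volume_eq_prod]
      exact (MeasurePreserving.id volume).prod Measure.measurePreserving_swap
    exact (ha.symm MeasurableEquiv.prodAssoc).comp hs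
  -- σ : the density ρ seen on the rearranged space
  set σf : ((ℝ × (Fin k → ℝ)) × ℝ) → ℝ := fun y => ρ (Te.symm y) with hσf
  have hσmeas : Measurable σf := by
    rw [hσf]; exact hρmeas.comp Te.symm.measurable
  have hσint : Integrable σf := by
    rw [← hT.integrable_comp hσmeas.aestronglyMeasurable]
    have : σf ∘ Te = ρ := by
      funext x; simp only [Function.comp_apply, hσf, MeasurableEquiv.symm_apply_apply]
    rwa [this]
  -- Step A : the two "pushforward" set integrals coincide, hence ∫_s p = ∫_s q
  have key_pq : ∀ s : Set ℝ, MeasurableSet s → ∫ t in s, p t = ∫ t in s, q t := by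
    intro s hs
    rw [hp s hs, hq s hs]
    set B : Set (ℝ × (Fin k → ℝ)) := {r | (Φm2 r).1 ∈ s} with hB
    have hBmeas : MeasurableSet B := (measurable_fst.comp hΦm2) hs
    have hA : {x : ℝ × ℝ × (Fin k → ℝ) | (Φ x).1 ∈ s} = Te ⁻¹' (B ×ˢ Set.univ) := by
      ext x
      obtain ⟨x₁, x₂, z⟩ := x
      simp only [Set.mem_setOf_eq, Set.mem_preimage, hTe, Set.mem_prod, Set.mem_univ,
        and_true, hB, hreduced x₁ x₂ z]
    have h1 : ∫ y in B ×ˢ Set.univ, σf y = ∫ x in Te ⁻¹' (B ×ˢ Set.univ), σf (Te x) :=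
      (hT.setIntegral_preimage_emb Te.measurableEmbedding σf _).symm
    have h2 : ∫ y in B ×ˢ Set.univ, σf y = ∫ r in B, ρm2 r := by
      rw [Measure.volume_eq_prod, setIntegral_prod σf (by
        rw [← Measure.volume_eq_prod]; exact hσint.integrableOn)]
      simp only [Measure.restrict_univ]
      refine setIntegral_congr_fun hBmeas fun r _ => ?_
      obtain ⟨x₁, z⟩ := r
      rw [hρm2 x₁ z]
      rfl
    rw [hA, ← h2, h1]
    refine setIntegral_congr_fun (Te.measurable (hBmeas.prod MeasurableSet.univ)) fun x _ => ?_
    simp only [hσf, MeasurableEquiv.symm_apply_apply]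
  -- trivial case : ρ vanishes a.e.
  by_cases hzero : ∫ x, ρ x = 0
  · have hρ0ae : ∀ᵐ x, ρ x = 0 := by
      have := (integral_eq_zero_iff_of_nonneg hρ0 hρint).mp hzero
      filter_upwards [this] with x hx using hx
    have hz : ∀ G : (ℝ × ℝ × (Fin k → ℝ)) → ℝ, ∫ x, ρ x * G x = 0 := by
      intro G
      rw [show (0:ℝ) = ∫ _ : ℝ × ℝ × (Fin k → ℝ), (0:ℝ) by simp]
      refine integral_congr_ae ?_
      filter_upwards [hρ0ae] with x hx
      simp [hx]
    rw [hz, hz, sub_zero]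
  -- main case
  · -- p and q are integrable
    have hp_univ : ∫ t, p t = ∫ x, ρ x := by
      have := hp Set.univ MeasurableSet.univ
      simpa using this
    have hq_univ : ∫ t, q t = ∫ x, ρ x := by
      rw [← hp_univ, ← setIntegral_univ, ← setIntegral_univ (f := p)]
      exact (key_pq Set.univ MeasurableSet.univ).symm
    have hpint : Integrable p := by
      by_contra h
      rw [integral_undef h] at hp_univ
      exact hzero hp_univ.symm
    have hqint : Integrable q := by
      by_contra h
      rw [integral_undef h] at hq_univ
      exact hzero hq_univ.symm
    have hpq : p =ᵐ[volume] q :=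
      ae_eq_of_forall_setIntegral_eq_of_sigmaFinite
        (fun s hs _ => hpint.integrableOn) (fun s hs _ => hqint.integrableOn)
        (fun s hs _ => key_pq s hs)
    -- a measurable null superset of {p ≠ q}
    set N : Set ℝ := toMeasurable volume {t | p t ≠ q t} with hNdef
    have hNmeas : MeasurableSet N := measurableSet_toMeasurable _ _
    have hN0 : volume N = 0 := by
      rw [hNdef, measure_toMeasurable]
      exact hpq
    have hNsub : {t | p t ≠ q t} ⊆ N := subset_toMeasurable _ _
    -- key : translates of N are not charged by the pushforward of ρ
    have key : ∀ c : ℝ, ∀ᵐ x : ℝ × ℝ × (Fin k → ℝ), ((Φ x).1 + c ∈ N → ρ x = 0) := by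
      intro c
      set s : Set ℝ := (fun t => t + c) ⁻¹' N with hsdef
      have hsmeas : MeasurableSet s := (measurable_id.add_const c) hNmeas
      have hs0 : volume s = 0 := by
        rw [hsdef]
        rw [measure_preimage_add_right]
        exact hN0
      have h0 : (0:ℝ) = ∫ x in {x : ℝ × ℝ × (Fin k → ℝ) | (Φ x).1 ∈ s}, ρ x := by
        rw [← hp s hsmeas, Measure.restrict_eq_zero.mpr hs0, integral_zero_measure]
      have hpre : MeasurableSet {x : ℝ × ℝ × (Fin k → ℝ) | (Φ x).1 ∈ s} :=
        (measurable_fst.comp hΦ) hsmeas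
      have hz : ρ =ᵐ[volume.restrict {x : ℝ × ℝ × (Fin k → ℝ) | (Φ x).1 ∈ s}] 0 := by
        refine (setIntegral_eq_zero_iff_of_nonneg_ae ?_ hρint.integrableOn).mp h0.symm
        exact Filter.Eventually.of_forall hρ0
      have := (ae_restrict_iff' hpre).mp hz
      filter_upwards [this] with x hx hmem
      exact hx hmem
    -- null bad set in the product space ((W × W) × X)
    set S : Set (((Fin m → ℝ) × (Fin m → ℝ)) × (ℝ × ℝ × (Fin k → ℝ))) :=
      {z | (Φ z.2).1 + B₁ ⬝ᵥ z.1.1 - B₁ ⬝ᵥ z.1.2 ∈ N ∧ ρ z.2 ≠ 0} with hSdef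
    have hdot : Measurable fun w : Fin m → ℝ => B₁ ⬝ᵥ w := by
      simp only [dotProduct]
      exact Finset.measurable_sum _ fun i _ => by fun_prop
    have hg : Measurable fun z : ((Fin m → ℝ) × (Fin m → ℝ)) × (ℝ × ℝ × (Fin k → ℝ)) =>
        (Φ z.2).1 + B₁ ⬝ᵥ z.1.1 - B₁ ⬝ᵥ z.1.2 :=
      ((measurable_fst.comp (hΦ.comp measurable_snd)).add
          (hdot.comp (measurable_fst.comp measurable_fst))).sub
        (hdot.comp (measurable_snd.comp measurable_fst))
    have hSmeas : MeasurableSet S := by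
      have h1 := hg hNmeas
      have hρ2 : Measurable fun z : ((Fin m → ℝ) × (Fin m → ℝ)) × (ℝ × ℝ × (Fin k → ℝ)) =>
          ρ z.2 := hρmeas.comp measurable_snd
      have h2 := (hρ2 (measurableSet_singleton (0:ℝ))).compl
      exact h1.inter h2
    have hS : ((volume.prod volume).prod (volume : Measure (ℝ × ℝ × (Fin k → ℝ)))) S = 0 := by
      rw [Measure.measure_prod_null hSmeas]
      refine Filter.Eventually.of_forall fun ww => ?_
      have hkey := key (B₁ ⬝ᵥ ww.1 - B₁ ⬝ᵥ ww.2)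
      refine measure_mono_null (fun x hx => ?_) (ae_iff.mp hkey)
      simp only [Set.mem_preimage, hSdef, Set.mem_setOf_eq] at hx
      simp only [Set.mem_setOf_eq]
      intro hP
      exact hx.2 (hP (by rw [← add_sub_assoc]; exact hx.1))
    have hS' : ((volume : Measure (ℝ × ℝ × (Fin k → ℝ))).prod (volume.prod volume))
        (Prod.swap ⁻¹' S) = 0 := by
      rw [← Measure.prod_swap, Measure.map_apply measurable_swap (measurable_swap hSmeas)]
      rwa [← Set.preimage_comp, Prod.swap_swap_eq, Set.preimage_id]
    have hae1 := Measure.measure_ae_null_of_prod_null hS'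
    -- final comparison of the two integrals
    rw [sub_eq_zero]
    refine integral_congr_ae ?_
    filter_upwards [hae1] with x hx
    simp only [Pi.zero_apply] at hx
    by_cases hρx : ρ x = 0
    · rw [hρx, zero_mul, zero_mul]
    · have hxset : (Prod.mk x ⁻¹' (Prod.swap ⁻¹' S)) =
          {ww : (Fin m → ℝ) × (Fin m → ℝ) |
            (Φ x).1 + B₁ ⬝ᵥ ww.1 - B₁ ⬝ᵥ ww.2 ∈ N} := by
        ext ww
        simp [hSdef, hρx]
      rw [hxset] at hx
      have hww : ∀ᵐ ww : (Fin m → ℝ) × (Fin m → ℝ) ∂(volume.prod volume),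
          (Φ x).1 + B₁ ⬝ᵥ ww.1 - B₁ ⬝ᵥ ww.2 ∉ N := measure_eq_zero_iff_ae_notMem.mp hx
      have hww' := Measure.ae_ae_of_ae_prod hww
      congr 1
      refine integral_congr_ae ?_
      filter_upwards [hww'] with w' hw'
      congr 1
      have : ∀ᵐ w : Fin m → ℝ, ρw w * q ((Φ x).1 + B₁ ⬝ᵥ w' - B₁ ⬝ᵥ w)
          = ρw w * p ((Φ x).1 + B₁ ⬝ᵥ w' - B₁ ⬝ᵥ w) := by
        filter_upwards [hw'] with w hw
        have : p ((Φ x).1 + B₁ ⬝ᵥ w' - B₁ ⬝ᵥ w) = q ((Φ x).1 + B₁ ⬝ᵥ w' - B₁ ⬝ᵥ w) := by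
          by_contra hne
          exact hw (hNsub hne)
        rw [this]
      rw [integral_congr_ae this]
end
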